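/- Let f : ℕ → ℕ and suppose there is a monotone relation R ⊆ ℕ^d × ℕ^d (meaning (x, y) ∈ R implies (x + v, y + v) ∈ R for all v ∈ ℕ^d, with d = 2 + ℓ) satisfying completeness: for every n there exist n' and e ∈ ℕ^ℓ with ((n, 0, 0ℓ), (n', f(n), e)) ∈ R; and safety: for all n, n', r, e, ((n, 0, 0ℓ), (n', r, e)) ∈ R implies r ≤ f(n). Then f is non-decreasing. -/
import Mathlib

theorem stmt_18 (ℓ : ℕ) (f : ℕ → ℕ)
    (R : (ℕ × ℕ × (Fin ℓ → ℕ)) → (ℕ × ℕ × (Fin ℓ → ℕ)) → Prop)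
    (hmono : ∀ x y v, R x y → R (x + v) (y + v))
    (hcomp : ∀ n : ℕ, ∃ (n' : ℕ) (e : Fin ℓ → ℕ), R (n, 0, 0) (n', f n, e))
    (hsafe : ∀ (n n' r : ℕ) (e : Fin ℓ → ℕ), R (n, 0, 0) (n', r, e) → r ≤ f n) :
    ∀ m n : ℕ, m ≤ n → f m ≤ f n := by
  intro m n hmn
  obtain ⟨n', e, hR⟩ := hcomp m
  have h := hmono _ _ (n - m, 0, 0) hR
  have hx : ((m, 0, 0) : ℕ × ℕ × (Fin ℓ → ℕ)) + (n - m, 0, 0) = (n, 0, 0) := by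
    simp [Prod.ext_iff, Nat.add_sub_cancel' hmn]
  rw [hx] at h
  exact hsafe _ _ _ _ h
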